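/- Let 2 ≤ i ≤ n and suppose the set {j ∈ [1,i) : x_j ≺ x_i} is nonempty, with maximum p. Then the subword x[p..i−1] is a Lyndon word. -/

import Mathlib

namespace LynArr

variable {α : Type*} [LinearOrder α]

/-- Strict lexicographic order on words:
`u ≺ v` iff `u` is a proper prefix of `v`, or at the first differing position `u` is smaller. -/
def Llt (u v : List α) : Prop := List.Lex (· < ·) u v

/-- The suffix `x_i = x[i..n]` (1-based indexing). -/
def suff (x : List α) (i : ℕ) : List α := x.drop (i - 1)

/-- The subword `x[i..j]` (1-based, inclusive). -/
def sub (x : List α) (i j : ℕ) : List α := (x.drop (i - 1)).take (j - i + 1)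

/-- `w` is a Lyndon word: nonempty and lexicographically smaller than
all of its nonempty proper suffixes. -/
def IsLyndon (w : List α) : Prop :=
  w ≠ [] ∧ ∀ k, 0 < k → k < w.length → Llt w (w.drop k)

/-- `w` is an inverse Lyndon word: nonempty and lexicographically greater than
all of its nonempty proper suffixes. -/
def IsInvLyndon (w : List α) : Prop :=
  w ≠ [] ∧ ∀ k, 0 < k → k < w.length → Llt (w.drop k) w

/-- `lce x i j`: the length of the longest common prefix of the suffixes `x_i` and `x_j`. -/
def lce (x : List α) (i j : ℕ) : ℕ :=
  (((suff x i).zip (suff x j)).takeWhile fun p => p.1 == p.2).length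

theorem llt_trans {a b c : List α} (h1 : Llt a b) (h2 : Llt b c) : Llt a c :=
  show List.Lex (· < ·) a c from
    List.lex_trans lt_trans (show List.Lex (· < ·) a b from h1) (show List.Lex (· < ·) b c from h2)

theorem lex_total : ∀ (a b : List α), ¬ List.Lex (· < ·) a b → a ≠ b →
    List.Lex (· < ·) b a
  | [], [], _, hne => absurd rfl hne
  | [], _ :: _, h, _ => absurd List.Lex.nil h
  | _ :: _, [], _, _ => List.Lex.nil
  | x :: a, y :: b, h, hne => by
    rcases lt_trichotomy x y with hxy | rfl | hxy
    · exact absurd (List.Lex.rel hxy) h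
    · refine List.Lex.cons (lex_total a b (fun h' => h (List.Lex.cons h')) ?_)
      rintro rfl; exact hne rfl
    · exact List.Lex.rel hxy

theorem lex_cancel_left : ∀ (c a b : List α), List.Lex (· < ·) (c ++ a) (c ++ b) →
    List.Lex (· < ·) a b
  | [], a, b, h => h
  | x :: c, a, b, h => by
    cases h with
    | cons h => exact lex_cancel_left c a b h
    | rel h => exact absurd h (lt_irrefl x)

theorem lex_append_same : ∀ (u v s : List α), List.Lex (· < ·) (u ++ s) (v ++ s) →
    List.Lex (· < ·) u v ∨ v <+: u
  | [], [], s, h => Or.inr (List.prefix_refl _)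
  | [], b :: v, s, _ => Or.inl List.Lex.nil
  | a :: u, [], s, _ => Or.inr (List.nil_prefix)
  | a :: u, b :: v, s, h => by
    cases h with
    | cons h =>
      rcases lex_append_same u v s h with h1 | h1
      · exact Or.inl (List.Lex.cons h1)
      · exact Or.inr (by obtain ⟨t, rfl⟩ := h1; exact ⟨t, rfl⟩)
    | rel h => exact Or.inl (List.Lex.rel h)

omit [LinearOrder α] in
theorem suff_decomp (x : List α) (i j : ℕ) (h1 : 1 ≤ j) (h2 : j < i) :
    suff x j = sub x j (i - 1) ++ suff x i := by
  unfold suff sub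
  rw [show i - 1 - j + 1 = i - j by omega]
  conv_lhs => rw [← List.take_append_drop (i - j) (x.drop (j - 1))]
  rw [List.drop_drop, show j - 1 + (i - j) = i - 1 by omega]

omit [LinearOrder α] in
theorem sub_length (x : List α) (i j : ℕ) (h1 : 1 ≤ j) (h2 : j < i) (h3 : i ≤ x.length) :
    (sub x j (i - 1)).length = i - j := by
  simp only [sub, List.length_take, List.length_drop]
  omega

omit [LinearOrder α] in
theorem sub_drop (x : List α) (i j k : ℕ) (h1 : 1 ≤ j) (h2 : j + k < i) :
    (sub x j (i - 1)).drop k = sub x (j + k) (i - 1) := by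
  unfold sub
  rw [List.drop_take, List.drop_drop,
    show j - 1 + k = j + k - 1 by omega,
    show i - 1 - j + 1 - k = i - 1 - (j + k) + 1 by omega]

/-- If `p = prev[i]` is the greatest `j ∈ [1, i)` with `x_j ≺ x_i`, then
`x[p..i-1]` is a Lyndon word. -/
theorem sub_prevSmaller_isLyndon {α : Type*} [LinearOrder α] (x : List α) (n i p : ℕ)
    (hn : n = x.length) (hi2 : 2 ≤ i) (hin : i ≤ n)
    (hp : IsGreatest {j | 1 ≤ j ∧ j < i ∧ Llt (suff x j) (suff x i)} p) :
    IsLyndon (sub x p (i - 1)) := by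
  obtain ⟨⟨hp1, hpi, hpl⟩, hub⟩ := hp
  have hinx : i ≤ x.length := hn ▸ hin
  have hwlen : (sub x p (i - 1)).length = i - p := sub_length x i p hp1 hpi hinx
  constructor
  · intro hnil
    have := congrArg List.length hnil
    rw [hwlen] at this
    simp at this
    omega
  · intro k hk hklt
    rw [hwlen] at hklt
    set j := p + k with hj
    have hj1 : 1 ≤ j := by omega
    have hji : j < i := by omega
    have hpj : p < j := by omega
    have hne : suff x j ≠ suff x i := by
      intro h
      have := congrArg List.length h
      simp only [suff, List.length_drop] at this
      omega
    have hnot : ¬ Llt (suff x j) (suff x i) := fun h =>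
      absurd (hub ⟨hj1, hji, h⟩) (by omega)
    have h2 : Llt (suff x i) (suff x j) := lex_total _ _ hnot hne
    have h3 : Llt (suff x p) (suff x j) := llt_trans hpl h2
    rw [suff_decomp x i p hp1 hpi, suff_decomp x i j hj1 hji] at h3
    rw [sub_drop x i p k hp1 (by omega)]
    rcases lex_append_same _ _ _ h3 with h4 | ⟨t, ht⟩
    · exact h4
    · exfalso
      have hvlen : (sub x j (i - 1)).length = i - j := sub_length x i j hj1 hji hinx
      have hts : t ++ suff x i = suff x (p + (i - j)) := by
        have heq : suff x p = sub x j (i - 1) ++ (t ++ suff x i) := by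
          rw [suff_decomp x i p hp1 hpi, ← ht, List.append_assoc]
        have h5 := congrArg (List.drop (i - j)) heq
        rw [show i - j = (sub x j (i - 1)).length from hvlen.symm] at h5
        rw [List.drop_left, hvlen] at h5
        unfold suff at h5 ⊢
        rw [List.drop_drop, show p - 1 + (i - j) = p + (i - j) - 1 by omega] at h5
        exact h5.symm
      set m := p + (i - j) with hm
      have hm1 : 1 ≤ m := by omega
      have hmi : m < i := by omega
      have hml : Llt (suff x m) (suff x i) := by
        rw [← hts]
        have h6 : Llt (sub x j (i - 1) ++ (t ++ suff x i)) (sub x j (i - 1) ++ suff x i) := by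
          rw [← List.append_assoc, ht]; exact h3
        exact lex_cancel_left _ _ _ h6
      have := hub ⟨hm1, hmi, hml⟩
      omega

end LynArr
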